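/- The function F(N_E) := N_E · (τ_E + I_1(N_E, N_I(N_E))) is differentiable on (0, 1/τ_E) with F'(N_E) = I_1(N_E, N_I(N_E)) + τ_E + N_E · [−b_E^E/√a_E + (b_I^E/√a_E)·N_I'(N_E)] · ∫_0^∞ e^{-s²/2} (e^{s·w_F} − e^{s·w_R}) ds, where w_F and w_R are evaluated at (N_E, N_I(N_E)). -/

import Mathlib

/-- K(w_R, w_F) := ∫_0^∞ (e^{-s²/2}/s)(e^{s·w_F} − e^{s·w_R}) ds (Lebesgue integral on (0,∞)). -/
noncomputable def K (wR wF : ℝ) : ℝ :=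
  ∫ s in Set.Ioi (0 : ℝ), Real.exp (-s ^ 2 / 2) / s * (Real.exp (s * wF) - Real.exp (s * wR))

/-- w_F(N_E,N_I) := (V_F − V_0^E(N_E,N_I))/√a_E with
V_0^E(N_E,N_I) := b_E^E N_E − b_I^E N_I + (b_E^E − b_E^E) ν_{E,ext}. -/
noncomputable def wFE (VR VF bEE bIE aE ν NE NI : ℝ) : ℝ :=
  (VF - (bEE * NE - bIE * NI + (bEE - bEE) * ν)) / Real.sqrt aE

/-- w_R(N_E,N_I) := (V_R − V_0^E(N_E,N_I))/√a_E. -/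
noncomputable def wRE (VR VF bEE bIE aE ν NE NI : ℝ) : ℝ :=
  (VR - (bEE * NE - bIE * NI + (bEE - bEE) * ν)) / Real.sqrt aE

/-- I₁(N_E,N_I) := ∫_0^∞ (e^{-s²/2}/s)(e^{s·w_F} − e^{s·w_R}) ds. -/
noncomputable def I1 (VR VF bEE bIE aE ν NE NI : ℝ) : ℝ :=
  K (wRE VR VF bEE bIE aE ν NE NI) (wFE VR VF bEE bIE aE ν NE NI)

/-- I₂(N_E,N_I) with V_0^I(N_E,N_I) := b_E^I N_E − b_I^I N_I + (b_E^I − b_E^E) ν_{E,ext}. -/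
noncomputable def I2 (VR VF bEE bEI bII aI ν NE NI : ℝ) : ℝ :=
  K ((VR - (bEI * NE - bII * NI + (bEI - bEE) * ν)) / Real.sqrt aI)
    ((VF - (bEI * NE - bII * NI + (bEI - bEE) * ν)) / Real.sqrt aI)

/- STATEMENT 12: The function F(N_E) := N_E·(τ_E + I_1(N_E, N_I(N_E))) is differentiable
on (0, 1/τ_E) with
F'(N_E) = I_1(N_E,N_I(N_E)) + τ_E + N_E·[−b_E^E/√a_E + (b_I^E/√a_E)·N_I'(N_E)]
  · ∫_0^∞ e^{-s²/2}(e^{s·w_F} − e^{s·w_R}) ds,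
where w_F and w_R are evaluated at (N_E, N_I(N_E)). -/
section Helpers
open MeasureTheory Real Set


lemma integrable_gauss_lin (c : ℝ) :
    Integrable (fun s : ℝ => Real.exp (-s ^ 2 / 2 + c * s)) := by
  have hI : Integrable (fun s : ℝ => Real.exp (-(1/2 : ℝ) * s ^ 2)) :=
    integrable_exp_neg_mul_sq (by norm_num)
  have h2 : Integrable ((fun s : ℝ => Real.exp (-(1/2 : ℝ) * s ^ 2)) ∘ (fun s : ℝ => s - c)) :=
    ((measurePreserving_sub_right volume c).integrable_comp hI.1).2 hI
  have h3 := h2.const_mul (Real.exp (c ^ 2 / 2))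
  refine h3.congr (Filter.Eventually.of_forall fun s => ?_)
  show Real.exp (c ^ 2 / 2) * Real.exp (-(1/2 : ℝ) * (s - c) ^ 2) = _
  rw [← Real.exp_add]; congr 1; ring

/-- exp x - exp y ≤ (x - y) exp x for y ≤ x. -/
lemma exp_sub_exp_le {x y : ℝ} (h : y ≤ x) :
    Real.exp x - Real.exp y ≤ (x - y) * Real.exp x := by
  have h1 : (y - x) + 1 ≤ Real.exp (y - x) := Real.add_one_le_exp _
  have h2 : Real.exp y = Real.exp x * Real.exp (y - x) := by
    rw [← Real.exp_add]; ring_nf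
  nlinarith [Real.exp_pos x]

lemma hasDerivAt_Kshift (A B : ℝ) (hAB : A ≤ B) (u : ℝ) :
    HasDerivAt (fun v : ℝ => ∫ s in Set.Ioi (0:ℝ),
        Real.exp (-s ^ 2 / 2) / s * (Real.exp (s * (B + v)) - Real.exp (s * (A + v))))
      (∫ s in Set.Ioi (0:ℝ),
        Real.exp (-s ^ 2 / 2) * (Real.exp (s * (B + u)) - Real.exp (s * (A + u)))) u := by
  have hmeasF : ∀ v : ℝ, AEStronglyMeasurable
      (fun s : ℝ => Real.exp (-s ^ 2 / 2) / s * (Real.exp (s * (B + v)) - Real.exp (s * (A + v))))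
      (volume.restrict (Set.Ioi (0:ℝ))) := by
    intro v
    apply Measurable.aestronglyMeasurable
    fun_prop
  have hmeasF' : ∀ v : ℝ, AEStronglyMeasurable
      (fun s : ℝ => Real.exp (-s ^ 2 / 2) * (Real.exp (s * (B + v)) - Real.exp (s * (A + v))))
      (volume.restrict (Set.Ioi (0:ℝ))) := by
    intro v
    apply Measurable.aestronglyMeasurable
    fun_prop
  have h := hasDerivAt_integral_of_dominated_loc_of_deriv_le
    (F := fun v s => Real.exp (-s ^ 2 / 2) / s * (Real.exp (s * (B + v)) - Real.exp (s * (A + v))))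
    (F' := fun v s => Real.exp (-s ^ 2 / 2) * (Real.exp (s * (B + v)) - Real.exp (s * (A + v))))
    (x₀ := u)
    (bound := fun s => Real.exp (-s ^ 2 / 2 + (B + u + 1) * s) + Real.exp (-s ^ 2 / 2 + (A + u + 1) * s))
    (μ := volume.restrict (Set.Ioi (0:ℝ)))
    (s := Metric.ball u 1) (Metric.ball_mem_nhds u one_pos)
    (Filter.Eventually.of_forall hmeasF)
    ?hint (hmeasF' u) ?hbound
    (((integrable_gauss_lin (B + u + 1)).add (integrable_gauss_lin (A + u + 1))).integrableOn)
    ?hdiff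
  · exact h.2
  case hint =>
    refine Integrable.mono ((integrable_gauss_lin (B + u)).const_mul (B - A)).integrableOn
      (hmeasF u) ?_
    rw [ae_restrict_iff' measurableSet_Ioi]
    refine Filter.Eventually.of_forall fun s hs => ?_
    simp only [Set.mem_Ioi] at hs
    have h1 : s * (A + u) ≤ s * (B + u) := by nlinarith
    have h2 : Real.exp (s * (B + u)) - Real.exp (s * (A + u)) ≤
        (s * (B + u) - s * (A + u)) * Real.exp (s * (B + u)) := exp_sub_exp_le h1
    have h3 : (0:ℝ) ≤ Real.exp (s * (B + u)) - Real.exp (s * (A + u)) := by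
      have := Real.exp_le_exp.2 h1; linarith
    rw [Real.norm_eq_abs, Real.norm_eq_abs, abs_mul]
    rw [abs_of_nonneg (div_nonneg (Real.exp_pos _).le hs.le), abs_of_nonneg h3]
    rw [abs_of_nonneg (mul_nonneg (by linarith) (Real.exp_pos _).le)]
    have h4 : Real.exp (-s ^ 2 / 2) / s * (Real.exp (s * (B + u)) - Real.exp (s * (A + u))) ≤
        Real.exp (-s ^ 2 / 2) / s * ((s * (B + u) - s * (A + u)) * Real.exp (s * (B + u))) := by
      apply mul_le_mul_of_nonneg_left h2 (div_nonneg (Real.exp_pos _).le hs.le)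
    refine h4.trans (le_of_eq ?_)
    rw [Real.exp_add]
    field_simp
    ring
  case hbound =>
    rw [ae_restrict_iff' measurableSet_Ioi]
    refine Filter.Eventually.of_forall fun s hs v hv => ?_
    simp only [Set.mem_Ioi] at hs
    rw [Metric.mem_ball, Real.dist_eq] at hv
    have hv1 : v ≤ u + 1 := by cases abs_lt.1 hv; linarith
    rw [Real.norm_eq_abs, abs_mul, abs_of_nonneg (le_of_lt (Real.exp_pos _))]
    have h1 : |Real.exp (s * (B + v)) - Real.exp (s * (A + v))| ≤
        Real.exp (s * (B + v)) + Real.exp (s * (A + v)) := by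
      refine (abs_sub _ _).trans ?_
      rw [abs_of_nonneg (le_of_lt (Real.exp_pos _)), abs_of_nonneg (le_of_lt (Real.exp_pos _))]
    have h2 : Real.exp (s * (B + v)) ≤ Real.exp ((B + u + 1) * s) :=
      Real.exp_le_exp.2 (by nlinarith)
    have h3 : Real.exp (s * (A + v)) ≤ Real.exp ((A + u + 1) * s) :=
      Real.exp_le_exp.2 (by nlinarith)
    calc Real.exp (-s ^ 2 / 2) * |Real.exp (s * (B + v)) - Real.exp (s * (A + v))|
        ≤ Real.exp (-s ^ 2 / 2) * (Real.exp ((B + u + 1) * s) + Real.exp ((A + u + 1) * s)) := by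
          apply mul_le_mul_of_nonneg_left _ (le_of_lt (Real.exp_pos _))
          exact h1.trans (add_le_add h2 h3)
      _ = Real.exp (-s ^ 2 / 2 + (B + u + 1) * s) + Real.exp (-s ^ 2 / 2 + (A + u + 1) * s) := by
          rw [mul_add, ← Real.exp_add, ← Real.exp_add]
  case hdiff =>
    rw [ae_restrict_iff' measurableSet_Ioi]
    refine Filter.Eventually.of_forall fun s hs v _ => ?_
    simp only [Set.mem_Ioi] at hs
    have hB : HasDerivAt (fun v : ℝ => Real.exp (s * (B + v))) (s * Real.exp (s * (B + v))) v := by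
      have h1 : HasDerivAt (fun v : ℝ => s * (B + v)) s v :=
        ((hasDerivAt_id v).const_add B).const_mul s |>.congr_deriv (by ring)
      refine ((Real.hasDerivAt_exp (s * (B + v))).comp v h1).congr_deriv ?_; ring
    have hA : HasDerivAt (fun v : ℝ => Real.exp (s * (A + v))) (s * Real.exp (s * (A + v))) v := by
      have h1 : HasDerivAt (fun v : ℝ => s * (A + v)) s v :=
        ((hasDerivAt_id v).const_add A).const_mul s |>.congr_deriv (by ring)
      refine ((Real.hasDerivAt_exp (s * (A + v))).comp v h1).congr_deriv ?_; ring
    have h : HasDerivAt (fun v => Real.exp (-s ^ 2 / 2) / s * (Real.exp (s * (B + v)) - Real.exp (s * (A + v)))) _ v :=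
      ((hB.sub hA).const_mul (Real.exp (-s ^ 2 / 2) / s))
    refine h.congr_deriv ?_
    field_simp

end Helpers

open MeasureTheory Real Set in
theorem F_hasDerivAt (VR VF bEE bIE bEI bII τE τI aE aI ν : ℝ)
    (hV : VR < VF) (hbEE : 0 < bEE) (hbIE : 0 < bIE) (hbEI : 0 < bEI) (hbII : 0 < bII)
    (hτE : 0 < τE) (hτI : 0 < τI) (haE : 0 < aE) (haI : 0 < aI) (hν : 0 ≤ ν)
    (NIfun NIfun' : ℝ → ℝ)
    (hNIfun : ∀ NE : ℝ, 0 ≤ NE → NIfun NE ∈ Set.Ioo 0 (1 / τI) ∧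
      NIfun NE * (τI + I2 VR VF bEE bEI bII aI ν NE (NIfun NE)) = 1)
    (hNIderiv : ∀ NE : ℝ, 0 ≤ NE → HasDerivAt NIfun (NIfun' NE) NE) :
    ∀ NE ∈ Set.Ioo (0 : ℝ) (1 / τE),
      HasDerivAt (fun x => x * (τE + I1 VR VF bEE bIE aE ν x (NIfun x)))
        (I1 VR VF bEE bIE aE ν NE (NIfun NE) + τE +
          NE * (-(bEE / Real.sqrt aE) + bIE / Real.sqrt aE * NIfun' NE) *
            ∫ s in Set.Ioi (0 : ℝ), Real.exp (-s ^ 2 / 2) *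
              (Real.exp (s * wFE VR VF bEE bIE aE ν NE (NIfun NE)) -
                Real.exp (s * wRE VR VF bEE bIE aE ν NE (NIfun NE))))
        NE := by
  intro NE hNE
  have hsq : (0:ℝ) < Real.sqrt aE := Real.sqrt_pos.2 haE
  set A := VR / Real.sqrt aE with hA
  set B := VF / Real.sqrt aE with hB
  have hAB : A ≤ B := by rw [hA, hB]; gcongr
  set u : ℝ → ℝ := fun x => -(bEE * x - bIE * NIfun x) / Real.sqrt aE with hu_def
  have hwF : ∀ x, wFE VR VF bEE bIE aE ν x (NIfun x) = B + u x := by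
    intro x; rw [wFE, hB, hu_def]; ring
  have hwR : ∀ x, wRE VR VF bEE bIE aE ν x (NIfun x) = A + u x := by
    intro x; rw [wRE, hA, hu_def]; ring
  have hI1 : ∀ x, I1 VR VF bEE bIE aE ν x (NIfun x) =
      ∫ s in Set.Ioi (0:ℝ), Real.exp (-s ^ 2 / 2) / s *
        (Real.exp (s * (B + u x)) - Real.exp (s * (A + u x))) := by
    intro x; rw [I1, K, hwF x, hwR x]
  have hu : HasDerivAt u (-(bEE / Real.sqrt aE) + bIE / Real.sqrt aE * NIfun' NE) NE := by
    have h1 : HasDerivAt (fun x => bEE * x - bIE * NIfun x) (bEE - bIE * NIfun' NE) NE := by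
      exact (((hasDerivAt_id NE).const_mul bEE).sub ((hNIderiv NE hNE.1.le).const_mul bIE)).congr_deriv (by ring)
    have h2 : HasDerivAt (fun x => -(bEE * x - bIE * NIfun x) / Real.sqrt aE) _ NE := (h1.neg).div_const (Real.sqrt aE)
    convert h2 using 1
    field_simp
    linear_combination
  have hg := hasDerivAt_Kshift A B hAB (u NE)
  have hcomp := hg.comp NE hu
  have hprod : HasDerivAt (fun x => x * (τE + ∫ s in Set.Ioi (0:ℝ), Real.exp (-s ^ 2 / 2) / s *
      (Real.exp (s * (B + u x)) - Real.exp (s * (A + u x))))) _ NE :=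
    (hasDerivAt_id NE).mul (hcomp.const_add τE)
  have hfun : (fun x => x * (τE + I1 VR VF bEE bIE aE ν x (NIfun x))) =
      (fun x => x * (τE + ∫ s in Set.Ioi (0:ℝ), Real.exp (-s ^ 2 / 2) / s *
        (Real.exp (s * (B + u x)) - Real.exp (s * (A + u x))))) :=
    funext fun x => by rw [hI1 x]
  rw [hfun, hI1 NE, hwF NE, hwR NE]
  convert hprod using 1
  simp only [Function.comp_apply, id_eq]
  ring
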